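/- arXiv:1106.5289 — 4 statements merged into one kernel-verified Lean document; each statement's English description precedes it below -/
import Mathlib

section
/- Let k be a field of characteristic zero, q ∈ k a primitive e-th root of unity, σ the automorphism of k[h] with σ(h) = qh, and f, g ∈ k[h] with f(0) ≠ 0. If the product f·g is fixed by σ, then N(f)/f divides g, where N(f) = lcm(f, σ(f), ..., σ^{e−1}(f)). -/
open Polynomial

/-- If `f(0) ≠ 0` and `f·g` is fixed by `σ : h ↦ qh` (with `q` a primitive
`e`-th root of unity), then `N(f)/f` divides `g`, where `N(f)` is the monic
lcm of `f, σf, …, σ^{e-1}f`. -/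
theorem Nf_div_dvd (k : Type*) [Field k] [CharZero k] (q : k) (e : ℕ)
    (he : 0 < e) (hq : IsPrimitiveRoot q e) (f g : k[X]) (hf : f.eval 0 ≠ 0)
    (Nf : k[X]) (hNmonic : Nf.Monic)
    (hNdvd : ∀ i < e, f.comp (C (q ^ i) * X) ∣ Nf)
    (hNmin : ∀ m : k[X], (∀ i < e, f.comp (C (q ^ i) * X) ∣ m) → Nf ∣ m)
    (hfg : (f * g).comp (C q * X) = f * g) :
    Nf / f ∣ g := by
  have hf0 : f ≠ 0 := fun h => hf (by simp [h])
  have hfix : ∀ i : ℕ, (f * g).comp (C (q ^ i) * X) = f * g := by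
    intro i
    induction i with
    | zero => simp
    | succ n ih =>
      have h1 : (C (q ^ (n + 1)) * X : k[X]) = (C q * X).comp (C (q ^ n) * X) := by
        rw [mul_comp, C_comp, X_comp, ← mul_assoc, ← C_mul, pow_succ, mul_comm (q ^ n) q]
      rw [h1, ← comp_assoc, hfg, ih]
  have hNfg : Nf ∣ f * g := by
    apply hNmin
    intro i hi
    calc f.comp (C (q ^ i) * X) ∣ (f * g).comp (C (q ^ i) * X) := by
          rw [mul_comp]; exact dvd_mul_right _ _
      _ = f * g := hfix i
  have hfN : f ∣ Nf := by
    have := hNdvd 0 he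
    simpa using this
  obtain ⟨c, hc⟩ := hfN
  rw [hc, mul_div_cancel_left₀ _ hf0]
  rw [hc] at hNfg
  exact (mul_dvd_mul_iff_left hf0).mp hNfg
end

section
/- Let k be a field of characteristic zero, q ∈ k a primitive e-th root of unity, σ the automorphism of k[h] with σ(h) = qh, and f, g ∈ k[h] with f(0) ≠ 0. If g is fixed by σ and f divides g, then there exists s ∈ k[h^e] such that g = N(f)·s, where N(f) = lcm(f, σ(f), ..., σ^{e−1}(f)). -/
open Polynomial

private lemma coeff_comp_C_mul_X {R : Type*} [CommSemiring R] (p : R[X]) (a : R) (n : ℕ) :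
    (p.comp (C a * X)).coeff n = a ^ n * p.coeff n := by
  induction p using Polynomial.induction_on' with
  | add p r hp hr => simp [add_comp, hp, hr, mul_add]
  | monomial m b =>
    simp only [monomial_comp, mul_pow, ← C_pow, coeff_C_mul, coeff_X_pow, coeff_monomial]
    rcases eq_or_ne n m with rfl | h
    · simp [mul_comm]
    · simp [h, Ne.symm h]

private lemma comp_comp_C_mul_X {R : Type*} [CommSemiring R] (p : R[X]) (a b : R) :
    (p.comp (C a * X)).comp (C b * X) = p.comp (C (a * b) * X) := by
  rw [comp_assoc]
  congr 1
  rw [mul_comp, C_comp, X_comp, ← mul_assoc, ← C_mul]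

private lemma dvd_comp {R : Type*} [CommSemiring R] {p r : R[X]} (u : R[X]) (h : p ∣ r) :
    p.comp u ∣ r.comp u := by
  obtain ⟨w, rfl⟩ := h
  exact ⟨w.comp u, mul_comp p w u⟩

/-- If `f(0) ≠ 0`, `g` is fixed by `σ : h ↦ qh` (with `q` a primitive `e`-th
root of unity) and `f ∣ g`, then `g = N(f)·s` for some `s ∈ k[h^e]`, where
`N(f)` is the monic lcm of `f, σf, …, σ^{e-1}f`. -/
theorem eq_Nf_mul_singular (k : Type*) [Field k] [CharZero k] (q : k) (e : ℕ)
    (he : 0 < e) (hq : IsPrimitiveRoot q e) (f g : k[X]) (hf : f.eval 0 ≠ 0)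
    (Nf : k[X]) (hNmonic : Nf.Monic)
    (hNdvd : ∀ i < e, f.comp (C (q ^ i) * X) ∣ Nf)
    (hNmin : ∀ m : k[X], (∀ i < e, f.comp (C (q ^ i) * X) ∣ m) → Nf ∣ m)
    (hg : g.comp (C q * X) = g) (hdvd : f ∣ g) :
    ∃ t : k[X], g = Nf * t.comp (X ^ e) := by
  have hq0 : q ≠ 0 := hq.ne_zero he.ne'
  have hqe : q ^ e = 1 := hq.pow_eq_one
  have hNne : Nf ≠ 0 := hNmonic.ne_zero
  -- g is fixed by all powers of σ
  have hgi : ∀ i, g.comp (C (q ^ i) * X) = g := by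
    intro i
    induction i with
    | zero => simpa using g.comp_X
    | succ n ih =>
      rw [pow_succ, ← comp_comp_C_mul_X, ih, hg]
  -- Nf divides g
  have hNg : Nf ∣ g := by
    refine hNmin g fun i hi => ?_
    have := dvd_comp (C (q ^ i) * X) hdvd
    rwa [hgi i] at this
  obtain ⟨t, ht⟩ := hNg
  -- Nf divides σ Nf
  have hNσ : Nf ∣ Nf.comp (C q * X) := by
    refine hNmin _ fun i hi => ?_
    rcases Nat.eq_zero_or_pos i with rfl | hi0
    · have h1 : f.comp (C (q ^ (e - 1)) * X) ∣ Nf := hNdvd _ (Nat.sub_lt he one_pos)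
      have h2 := dvd_comp (C q * X) h1
      rw [comp_comp_C_mul_X, ← pow_succ, Nat.sub_add_cancel he, hqe] at h2
      simpa using h2
    · have h1 : f.comp (C (q ^ (i - 1)) * X) ∣ Nf := hNdvd _ (lt_of_le_of_lt (Nat.sub_le i 1) hi)
      have h2 := dvd_comp (C q * X) h1
      rwa [comp_comp_C_mul_X, ← pow_succ, Nat.sub_add_cancel hi0] at h2
  obtain ⟨u, hu⟩ := hNσ
  -- degree considerations: u is a constant
  have hσne : Nf.comp (C q * X) ≠ 0 := by
    intro h
    have hc := coeff_comp_C_mul_X Nf q Nf.natDegree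
    rw [h, coeff_zero, hNmonic.coeff_natDegree, mul_one] at hc
    exact pow_ne_zero _ hq0 hc.symm
  have hune : u ≠ 0 := by
    rintro rfl
    rw [mul_zero] at hu
    exact hσne hu
  have hdeg : u.natDegree = 0 := by
    have h1 : (Nf.comp (C q * X)).natDegree = Nf.natDegree := by
      rw [natDegree_comp, natDegree_C_mul hq0, natDegree_X, mul_one]
    have h2 : (Nf * u).natDegree = Nf.natDegree + u.natDegree := natDegree_mul hNne hune
    rw [hu] at h1
    omega
  have hu' : u = C (u.coeff 0) := eq_C_of_natDegree_eq_zero hdeg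
  -- Nf has nonzero constant term
  have hN0 : Nf.eval 0 ≠ 0 := by
    have hdvdm : Nf ∣ ∏ i ∈ Finset.range e, f.comp (C (q ^ i) * X) :=
      hNmin _ fun i hi => Finset.dvd_prod_of_mem _ (Finset.mem_range.2 hi)
    obtain ⟨w, hw⟩ := hdvdm
    have hm0 : (∏ i ∈ Finset.range e, f.comp (C (q ^ i) * X)).eval 0 ≠ 0 := by
      rw [eval_prod]
      refine Finset.prod_ne_zero_iff.2 fun i _ => ?_
      simpa using hf
    rw [hw, eval_mul] at hm0
    exact fun h => hm0 (by rw [h, zero_mul])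
  -- evaluate at 0 to see u = 1, so σ Nf = Nf
  have hu1 : u.coeff 0 = 1 := by
    have hev := congrArg (eval 0) hu
    rw [eval_comp, hu'] at hev
    simp only [eval_mul, eval_C, eval_X, mul_zero] at hev
    exact (mul_left_cancel₀ hN0 (by rw [mul_one]; exact hev)).symm
  have hNfix : Nf.comp (C q * X) = Nf := by
    rw [hu, hu', hu1, map_one, mul_one]
  -- hence t is fixed by σ
  have htfix : t.comp (C q * X) = t := by
    have h1 : Nf * t.comp (C q * X) = Nf * t := by
      conv_lhs => rw [← hNfix]
      rw [← mul_comp, ← ht, hg, ht]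
    exact mul_left_cancel₀ hNne h1
  -- so coefficients of t vanish off multiples of e
  have hcoeff : ∀ n, ¬ e ∣ n → t.coeff n = 0 := by
    intro n hn
    have h1 : q ^ n * t.coeff n = t.coeff n := by
      rw [← coeff_comp_C_mul_X, htfix]
    by_contra h0
    have hqn : q ^ n = 1 := mul_right_cancel₀ h0 (h1.trans (one_mul _).symm)
    exact hn ((hq.pow_eq_one_iff_dvd n).1 hqn)
  refine ⟨contract e t, ?_⟩
  rw [ht]
  congr 1
  rw [← expand_eq_comp_X_pow]
  ext n
  rw [coeff_expand he, coeff_contract he.ne']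
  split_ifs with h
  · rw [Nat.div_mul_cancel h]
  · exact hcoeff n h
end

section
/- Let k be a field of characteristic zero, q ∈ k a primitive e-th root of unity acting on k[h]/(N) by the automorphism induced from σ(h) = qh, where N ∈ k[h] is a σ-invariant polynomial of degree d with N(0) ≠ 0. Then the subspace of σ-invariants of k[h]/(N) has dimension d/e over k. -/
open Polynomial

section aux

variable {k : Type*} [Field k]

/-- A linear equivalence between `Submodule.pi Set.univ V` and the pi type of the `V i`. -/
def piSubmoduleEquiv {ι : Type*} {M : ι → Type*} [∀ i, AddCommGroup (M i)]
    [∀ i, Module k (M i)] (V : ∀ i, Submodule k (M i)) :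
    ↥(Submodule.pi Set.univ V) ≃ₗ[k] ∀ i, ↥(V i) where
  toFun x i := ⟨x.1 i, x.2 i (Set.mem_univ i)⟩
  invFun f := ⟨fun i => f i, fun i _ => (f i).2⟩
  map_add' x y := rfl
  map_smul' c x := rfl
  left_inv x := rfl
  right_inv f := rfl

lemma count_multiples_aux (e d : ℕ) (he : 0 < e) (hed : e ∣ d) :
    (∑ i : Fin d, (if e ∣ (i : ℕ) then 1 else 0)) = d / e := by
  rw [Fin.sum_univ_eq_sum_range (fun i => if e ∣ i then 1 else 0) d]
  rw [Finset.sum_boole]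
  have himg : (Finset.range d).filter (fun i => e ∣ i) =
      (Finset.range (d / e)).image (fun j => j * e) := by
    ext i
    simp only [Finset.mem_filter, Finset.mem_range, Finset.mem_image]
    constructor
    · rintro ⟨hid, j, rfl⟩
      exact ⟨j, (Nat.lt_div_iff_mul_lt' hed j).mpr hid, mul_comm j e ▸ rfl⟩
    · rintro ⟨j, hj, rfl⟩
      rw [Nat.lt_div_iff_mul_lt' hed] at hj
      exact ⟨by rwa [mul_comm], j, mul_comm j e⟩
  rw [himg, Finset.card_image_of_injective _ (fun a b h => Nat.eq_of_mul_eq_mul_right he h)]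
  simp

end aux

/-- Let `q` be a primitive `e`-th root of unity, `σ(h) = qh`, and `N ∈ k[h]`
monic with `σ(N) = N`, `N(0) ≠ 0`, `deg N = d`. The automorphism `σ` descends
to `k[h]/(N)`, and the subspace of `σ`-invariants of `k[h]/(N)` has dimension
`d / e` over `k`. -/
theorem finrank_invariants_quotient (k : Type*) [Field k] [CharZero k]
    (q : k) (e : ℕ) (he : 0 < e) (hq : IsPrimitiveRoot q e)
    (N : k[X]) (hmonic : N.Monic) (h0 : N.eval 0 ≠ 0)
    (hN : N.comp (C q * X) = N)
    (hle : (Ideal.span {N}).restrictScalars k ≤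
      Submodule.comap (Polynomial.aeval (C q * X) : k[X] →ₐ[k] k[X]).toLinearMap
        ((Ideal.span {N}).restrictScalars k)) :
    Module.finrank k
      ↥(LinearMap.ker
        (Submodule.mapQ ((Ideal.span {N}).restrictScalars k)
            ((Ideal.span {N}).restrictScalars k)
            (Polynomial.aeval (C q * X) : k[X] →ₐ[k] k[X]).toLinearMap hle
          - LinearMap.id))
      = N.natDegree / e := by
  classical
  set d := N.natDegree with hd
  have hq0 : q ≠ 0 := hq.ne_zero he.ne'
  -- e divides d
  have hqd : q ^ d = 1 := by
    have h1 : (C q * X).natDegree = 1 := natDegree_C_mul_X q hq0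
    have hl := congrArg leadingCoeff hN
    rw [leadingCoeff_comp (by rw [h1]; norm_num)] at hl
    have hlc : (C q * X).leadingCoeff = q := by
      rw [leadingCoeff, h1]
      simp
    rw [hmonic.leadingCoeff, hlc] at hl
    simpa using hl
  have hed : e ∣ d := hq.dvd_of_pow_eq_one d hqd
  -- the basis of the quotient given by powers of X
  set p : Submodule k k[X] := (Ideal.span {N}).restrictScalars k with hp
  let E0 : (k[X] ⧸ p) ≃ₗ[k] AdjoinRoot N :=
    Submodule.Quotient.restrictScalarsEquiv k (Ideal.span {N})
  let B : Module.Basis (Fin d) k (k[X] ⧸ p) :=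
    (AdjoinRoot.powerBasisAux' hmonic).map E0.symm
  have hB : ∀ i : Fin d, B i = Submodule.Quotient.mk (X ^ (i : ℕ)) := by
    intro i
    have h1 : (AdjoinRoot.powerBasisAux' hmonic) i = AdjoinRoot.mk N (X ^ (i : ℕ)) := by
      have h2 : (AdjoinRoot.powerBasisAux' hmonic) i = AdjoinRoot.root N ^ (i : ℕ) :=
        (AdjoinRoot.powerBasis' hmonic).basis_eq_pow i
      rw [h2, map_pow, AdjoinRoot.mk_X]
    show E0.symm ((AdjoinRoot.powerBasisAux' hmonic) i) = _
    rw [h1]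
    exact Submodule.Quotient.restrictScalarsEquiv_symm_mk k (Ideal.span {N}) _
  set σL : k[X] →ₗ[k] k[X] := (Polynomial.aeval (C q * X) : k[X] →ₐ[k] k[X]).toLinearMap
    with hσL
  set φ : (k[X] ⧸ p) →ₗ[k] (k[X] ⧸ p) := Submodule.mapQ p p σL hle - LinearMap.id with hφ
  have hT : ∀ i : Fin d, φ (B i) = (q ^ (i : ℕ) - 1) • B i := by
    intro i
    rw [hB]
    have h2 : σL (X ^ (i : ℕ)) = (q ^ (i : ℕ)) • X ^ (i : ℕ) := by
      rw [hσL]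
      simp only [AlgHom.toLinearMap_apply, map_pow, aeval_X]
      rw [mul_pow, ← C_pow, ← smul_eq_C_mul]
    rw [hφ, LinearMap.sub_apply, Submodule.mapQ_apply, LinearMap.id_apply, h2,
      Submodule.Quotient.mk_smul, sub_smul, one_smul]
  -- conjugate by the basis equivalence
  let c : Fin d → k := fun i => q ^ (i : ℕ) - 1
  let D : (Fin d → k) →ₗ[k] (Fin d → k) := LinearMap.pi (fun i => c i • LinearMap.proj i)
  have hcomm : (B.equivFun.toLinearMap) ∘ₗ φ = D ∘ₗ B.equivFun.toLinearMap := by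
    apply B.ext
    intro i
    simp only [LinearMap.comp_apply, LinearEquiv.coe_coe, hT]
    rw [map_smul]
    funext j
    simp only [Module.Basis.equivFun_self, Pi.smul_apply, LinearMap.pi_apply, LinearMap.smul_apply,
      LinearMap.proj_apply, smul_eq_mul, D, c]
    by_cases hij : i = j
    · subst hij; simp
    · simp [Ne.symm hij, hij]
  have hker : LinearMap.ker φ =
      Submodule.map (B.equivFun.symm : (Fin d → k) →ₗ[k] (k[X] ⧸ p)) (LinearMap.ker D) := by
    rw [← Submodule.comap_equiv_eq_map_symm]
    ext x
    simp only [LinearMap.mem_ker, Submodule.mem_comap, LinearEquiv.coe_coe]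
    constructor
    · intro hx
      have h3 : D (B.equivFun x) = B.equivFun (φ x) := by
        have := congrFun (congrArg DFunLike.coe hcomm.symm) x
        simpa using this
      rw [h3, hx, map_zero]
    · intro hx
      have h3 : B.equivFun (φ x) = D (B.equivFun x) := by
        have := congrFun (congrArg DFunLike.coe hcomm) x
        simpa using this
      have : B.equivFun (φ x) = 0 := by rw [h3, hx]
      simpa using (B.equivFun.map_eq_zero_iff).mp this
  rw [hker, LinearEquiv.finrank_map_eq]
  -- the kernel of the diagonal map
  have hkerD : LinearMap.ker D = Submodule.pi Set.univ
      (fun i => if c i = 0 then (⊤ : Submodule k k) else ⊥) := by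
    ext x
    simp only [LinearMap.mem_ker, Submodule.mem_pi, Set.mem_univ, forall_true_left]
    constructor
    · intro hx i
      have : c i * x i = 0 := congrFun hx i
      by_cases hci : c i = 0
      · simp [hci]
      · simp only [hci, if_false, Submodule.mem_bot]
        exact (mul_eq_zero.mp this).resolve_left hci
    · intro hx
      funext i
      have := hx i
      by_cases hci : c i = 0
      · simp [D, hci]
      · simp only [hci, if_false, Submodule.mem_bot] at this
        simp [D, this]
  rw [hkerD]
  rw [LinearEquiv.finrank_eq (piSubmoduleEquiv _)]
  rw [Module.finrank_pi_fintype]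
  have hterm : ∀ i : Fin d,
      Module.finrank k ↥(if c i = 0 then (⊤ : Submodule k k) else ⊥)
        = if e ∣ (i : ℕ) then 1 else 0 := by
    intro i
    have hc : c i = 0 ↔ e ∣ (i : ℕ) := by
      rw [show c i = q ^ (i : ℕ) - 1 from rfl, sub_eq_zero]
      exact hq.pow_eq_one_iff_dvd (i : ℕ)
    by_cases hci : c i = 0
    · rw [if_pos hci, if_pos (hc.mp hci), finrank_top, Module.finrank_self]
    · rw [if_neg hci, if_neg (fun h => hci (hc.mpr h)), finrank_bot]
  rw [Finset.sum_congr rfl (fun i _ => hterm i)]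
  exact count_multiples_aux e d he hed
end

section
/- Let k be a field of characteristic zero, q ∈ k \ {0,1}, and a ∈ k[h] monic of degree N > 1. In the algebra A generated by y, h, x with relations xh = qhx, hy = qyh, yx = a(h), xy = a(qh), the set {y^i h^j : i, j ≥ 0} ∪ {h^j x^k : j ≥ 0, k ≥ 1} is a basis of A as a k-vector space. -/
open Polynomial

/-- Generators: `ι 0 = y`, `ι 1 = h`, `ι 2 = x`. Defining relations of the
quantum generalized Weyl algebra `A(a,q)`:
`xh = q·hx`, `hy = q·yh`, `yx = a(h)`, `xy = a(qh)`. -/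
inductive gwaRel (k : Type*) [CommRing k] (q : k) (a : k[X]) :
    FreeAlgebra k (Fin 3) → FreeAlgebra k (Fin 3) → Prop
  | xh : gwaRel k q a (FreeAlgebra.ι k 2 * FreeAlgebra.ι k 1)
      (q • (FreeAlgebra.ι k 1 * FreeAlgebra.ι k 2))
  | hy : gwaRel k q a (FreeAlgebra.ι k 1 * FreeAlgebra.ι k 0)
      (q • (FreeAlgebra.ι k 0 * FreeAlgebra.ι k 1))
  | yx : gwaRel k q a (FreeAlgebra.ι k 0 * FreeAlgebra.ι k 2)
      (aeval (FreeAlgebra.ι k 1) a)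
  | xy : gwaRel k q a (FreeAlgebra.ι k 2 * FreeAlgebra.ι k 0)
      (aeval (q • FreeAlgebra.ι k 1) a)

/-- The quantum generalized Weyl algebra `A(a,q)`. -/
abbrev GWA (k : Type*) [CommRing k] (q : k) (a : k[X]) := RingQuot (gwaRel k q a)

/-- `y ∈ A(a,q)`. -/
noncomputable def GWA.y (k : Type*) [CommRing k] (q : k) (a : k[X]) : GWA k q a :=
  RingQuot.mkAlgHom k (gwaRel k q a) (FreeAlgebra.ι k 0)

/-- `h ∈ A(a,q)`. -/
noncomputable def GWA.h (k : Type*) [CommRing k] (q : k) (a : k[X]) : GWA k q a :=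
  RingQuot.mkAlgHom k (gwaRel k q a) (FreeAlgebra.ι k 1)

/-- `x ∈ A(a,q)`. -/
noncomputable def GWA.x (k : Type*) [CommRing k] (q : k) (a : k[X]) : GWA k q a :=
  RingQuot.mkAlgHom k (gwaRel k q a) (FreeAlgebra.ι k 2)

namespace GWAproof
open Polynomial

variable {k : Type*} [Field k]

/-! ### The representation space `ℤ →₀ k[X]` and operators -/

noncomputable def Hop (q : k) : (ℤ →₀ k[X]) →ₗ[k] (ℤ →₀ k[X]) :=
  Finsupp.lsum k fun n => (Finsupp.lsingle n).comp (LinearMap.mulLeft k (C (q ^ (-n)) * X))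

noncomputable def Xop : (ℤ →₀ k[X]) →ₗ[k] (ℤ →₀ k[X]) :=
  Finsupp.lsum k fun n => Finsupp.lsingle (n + 1)

noncomputable def Yop (q : k) (a : k[X]) : (ℤ →₀ k[X]) →ₗ[k] (ℤ →₀ k[X]) :=
  Finsupp.lsum k fun n => (Finsupp.lsingle (n - 1)).comp
    (LinearMap.mulLeft k (aeval (C (q ^ (1 - n)) * X) a))

@[simp] lemma Hop_single (q : k) (n : ℤ) (f : k[X]) :
    Hop q (Finsupp.single n f) = Finsupp.single n (C (q ^ (-n)) * X * f) := by
  rw [Hop, Finsupp.lsum_single]; rfl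

@[simp] lemma Xop_single (n : ℤ) (f : k[X]) :
    Xop (k := k) (Finsupp.single n f) = Finsupp.single (n + 1) f := by
  rw [Xop, Finsupp.lsum_single]; rfl

@[simp] lemma Yop_single (q : k) (a : k[X]) (n : ℤ) (f : k[X]) :
    Yop q a (Finsupp.single n f)
      = Finsupp.single (n - 1) (aeval (C (q ^ (1 - n)) * X) a * f) := by
  rw [Yop, Finsupp.lsum_single]; rfl

/-- Powers of a "diagonal" operator. -/
lemma pow_single (T : Module.End k (ℤ →₀ k[X])) (m : ℤ → k[X])
    (hT : ∀ n f, T (Finsupp.single n f) = Finsupp.single n (m n * f))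
    (t : ℕ) (n : ℤ) (f : k[X]) :
    (T ^ t) (Finsupp.single n f) = Finsupp.single n (m n ^ t * f) := by
  induction t generalizing f with
  | zero => simp
  | succ t ih =>
      rw [pow_succ, Module.End.mul_apply, hT, ih]
      congr 1
      ring

/-- `aeval` of a diagonal operator acts diagonally. -/
lemma aeval_diag (T : Module.End k (ℤ →₀ k[X])) (m : ℤ → k[X])
    (hT : ∀ n f, T (Finsupp.single n f) = Finsupp.single n (m n * f))
    (p : k[X]) (n : ℤ) (f : k[X]) :
    (aeval T p) (Finsupp.single n f) = Finsupp.single n (aeval (m n) p * f) := by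
  induction p using Polynomial.induction_on' with
  | add p r hp hr =>
      rw [map_add, map_add, LinearMap.add_apply, hp, hr, add_mul, Finsupp.single_add]
  | monomial t c =>
      rw [aeval_monomial, aeval_monomial, Module.End.mul_apply,
        pow_single T m hT, Module.algebraMap_end_apply, Finsupp.smul_single,
        Polynomial.smul_eq_C_mul]
      simp [mul_assoc, algebraMap_eq]

section Rep
variable (q : k) (a : k[X])

noncomputable def Fop : FreeAlgebra k (Fin 3) →ₐ[k] Module.End k (ℤ →₀ k[X]) :=
  FreeAlgebra.lift k ![Yop q a, Hop q, Xop]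

@[simp] lemma Fop_y : Fop q a (FreeAlgebra.ι k 0) = Yop q a := by
  simp [Fop]

@[simp] lemma Fop_h : Fop q a (FreeAlgebra.ι k 1) = Hop q := by
  simp [Fop]

@[simp] lemma Fop_x : Fop q a (FreeAlgebra.ι k 2) = Xop := by
  simp [Fop]

lemma Fop_rel (hq0 : q ≠ 0) ⦃u v : FreeAlgebra k (Fin 3)⦄ (h : gwaRel k q a u v) :
    Fop q a u = Fop q a v := by
  induction h with
  | xh =>
      rw [map_mul, map_smul, map_mul, Fop_x, Fop_h]
      refine Finsupp.lhom_ext fun n f => ?_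
      simp only [Module.End.mul_apply, LinearMap.smul_apply, Hop_single, Xop_single,
        Finsupp.smul_single]
      congr 1
      rw [show (-n : ℤ) = 1 + -(n+1) by ring, zpow_add₀ hq0, zpow_one,
        Polynomial.smul_eq_C_mul, C_mul]
      ring
  | hy =>
      rw [map_mul, map_smul, map_mul, Fop_h, Fop_y]
      refine Finsupp.lhom_ext fun n f => ?_
      simp only [Module.End.mul_apply, LinearMap.smul_apply, Hop_single, Yop_single,
        Finsupp.smul_single]
      congr 1
      rw [show (-(n - 1) : ℤ) = 1 + -n by ring, zpow_add₀ hq0, zpow_one,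
        Polynomial.smul_eq_C_mul, C_mul]
      ring
  | yx =>
      rw [map_mul, Fop_y, Fop_x, ← Polynomial.aeval_algHom_apply, Fop_h]
      refine Finsupp.lhom_ext fun n f => ?_
      rw [Module.End.mul_apply, Xop_single, Yop_single,
        aeval_diag (Hop q) (fun n => C (q ^ (-n)) * X) (fun n f => Hop_single q n f),
        show ((n:ℤ)+1-1) = n by ring, show (1 - (n+1) : ℤ) = -n by ring]
  | xy =>
      rw [map_mul, Fop_x, Fop_y, ← Polynomial.aeval_algHom_apply, map_smul, Fop_h]
      refine Finsupp.lhom_ext fun n f => ?_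
      have hd : ∀ (n : ℤ) (f : k[X]), (q • Hop q) (Finsupp.single n f)
          = Finsupp.single n (C (q ^ (1 - n)) * X * f) := by
        intro n f
        rw [LinearMap.smul_apply, Hop_single, Finsupp.smul_single,
          Polynomial.smul_eq_C_mul, show (1 - n : ℤ) = 1 + -n by ring, zpow_add₀ hq0,
          zpow_one, C_mul]
        ring_nf
      rw [Module.End.mul_apply, Yop_single, Xop_single,
        aeval_diag (q • Hop q) (fun n => C (q ^ (1 - n)) * X) hd,
        show ((n:ℤ)-1+1) = n by ring]

noncomputable def phi (hq0 : q ≠ 0) : GWA k q a →ₐ[k] Module.End k (ℤ →₀ k[X]) :=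
  RingQuot.liftAlgHom k ⟨Fop q a, Fop_rel q a hq0⟩

variable (hq0 : q ≠ 0)

@[simp] lemma phi_y : phi q a hq0 (GWA.y k q a) = Yop q a := by
  rw [GWA.y, phi, RingQuot.liftAlgHom_mkAlgHom_apply, Fop_y]

@[simp] lemma phi_h : phi q a hq0 (GWA.h k q a) = Hop q := by
  rw [GWA.h, phi, RingQuot.liftAlgHom_mkAlgHom_apply, Fop_h]

@[simp] lemma phi_x : phi q a hq0 (GWA.x k q a) = Xop := by
  rw [GWA.x, phi, RingQuot.liftAlgHom_mkAlgHom_apply, Fop_x]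

end Rep

/-! ### Relations inside the GWA -/

section Rels
variable (q : k) (a : k[X])

local notation "Y" => GWA.y k q a
local notation "H" => GWA.h k q a
local notation "Xg" => GWA.x k q a

lemma rel_xh : Xg * H = q • (H * Xg) := by
  have h1 := RingQuot.mkAlgHom_rel k (gwaRel.xh (k := k) (q := q) (a := a))
  rw [map_mul, map_smul, map_mul] at h1
  exact h1

lemma rel_hy : H * Y = q • (Y * H) := by
  have h1 := RingQuot.mkAlgHom_rel k (gwaRel.hy (k := k) (q := q) (a := a))
  rw [map_mul, map_smul, map_mul] at h1
  exact h1

lemma rel_yx : Y * Xg = aeval H a := by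
  have h1 := RingQuot.mkAlgHom_rel k (gwaRel.yx (k := k) (q := q) (a := a))
  rw [map_mul, ← Polynomial.aeval_algHom_apply] at h1
  exact h1

lemma rel_xy : Xg * Y = aeval (q • H) a := by
  have h1 := RingQuot.mkAlgHom_rel k (gwaRel.xy (k := k) (q := q) (a := a))
  rw [map_mul, ← Polynomial.aeval_algHom_apply, map_smul] at h1
  exact h1

lemma x_hpow (j : ℕ) : Xg * H ^ j = q ^ j • (H ^ j * Xg) := by
  induction j with
  | zero => simp
  | succ j ih =>
      calc Xg * H ^ (j + 1) = (Xg * H ^ j) * H := by rw [pow_succ, mul_assoc]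
      _ = q ^ j • (H ^ j * (Xg * H)) := by rw [ih, smul_mul_assoc, mul_assoc]
      _ = q ^ j • (H ^ j * (q • (H * Xg))) := by rw [rel_xh]
      _ = q ^ (j + 1) • (H ^ (j + 1) * Xg) := by
            rw [mul_smul_comm, smul_smul, ← mul_assoc, ← pow_succ, ← pow_succ]

lemma hpow_y (t : ℕ) : H ^ t * Y = q ^ t • (Y * H ^ t) := by
  induction t with
  | zero => simp
  | succ t ih =>
      calc H ^ (t + 1) * Y = H * (H ^ t * Y) := by rw [pow_succ', mul_assoc]
      _ = q ^ t • ((H * Y) * H ^ t) := by rw [ih, mul_smul_comm, mul_assoc]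
      _ = q ^ t • ((q • (Y * H)) * H ^ t) := by rw [rel_hy]
      _ = q ^ (t + 1) • (Y * H ^ (t + 1)) := by
            rw [smul_mul_assoc, smul_smul, mul_assoc, ← pow_succ, ← pow_succ']

lemma hpow_ypow (t i : ℕ) : H ^ t * Y ^ i = q ^ (t * i) • (Y ^ i * H ^ t) := by
  induction i with
  | zero => simp
  | succ i ih =>
      calc H ^ t * Y ^ (i + 1) = (H ^ t * Y ^ i) * Y := by rw [pow_succ, mul_assoc]
      _ = q ^ (t * i) • (Y ^ i * (H ^ t * Y)) := by rw [ih, smul_mul_assoc, mul_assoc]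
      _ = q ^ (t * i) • (Y ^ i * (q ^ t • (Y * H ^ t))) := by rw [hpow_y]
      _ = q ^ (t * (i + 1)) • (Y ^ (i + 1) * H ^ t) := by
            rw [mul_smul_comm, smul_smul, ← mul_assoc, ← pow_succ, ← pow_add,
              Nat.mul_succ]

lemma y_hpow (hq0 : q ≠ 0) (j : ℕ) : Y * H ^ j = (q ^ j)⁻¹ • (H ^ j * Y) := by
  rw [hpow_y, smul_smul, inv_mul_cancel₀ (pow_ne_zero j hq0), one_smul]

/-! ### The monomial family and spanning -/

noncomputable def bfun : (ℕ × ℕ) ⊕ (ℕ × ℕ) → GWA k q a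
  | .inl (i, j) => GWA.y k q a ^ i * GWA.h k q a ^ j
  | .inr (j, m) => GWA.h k q a ^ j * GWA.x k q a ^ (m + 1)

lemma span_top (hq0 : q ≠ 0) : Submodule.span k (Set.range (bfun q a)) = ⊤ := by
  set M := Submodule.span k (Set.range (bfun q a)) with hM
  have hsub : Set.range (bfun q a) ⊆ M := Submodule.subset_span
  have hmem1 : ∀ s m : ℕ, (H ^ s * Xg ^ m : GWA k q a) ∈ M := by
    intro s m
    match m with
    | 0 =>
        have he : (H ^ s * Xg ^ 0 : GWA k q a) = bfun q a (.inl (0, s)) := by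
          simp [bfun]
        rw [he]; exact hsub ⟨_, rfl⟩
    | m + 1 => exact hsub ⟨.inr (s, m), rfl⟩
  have hmemP : ∀ p : k[X], ∀ s m : ℕ, (H ^ s * aeval H p * Xg ^ m : GWA k q a) ∈ M := by
    intro p
    induction p using Polynomial.induction_on' with
    | add p r hp hr =>
        intro s m
        rw [map_add, mul_add, add_mul]
        exact add_mem (hp s m) (hr s m)
    | monomial t c =>
        intro s m
        rw [aeval_monomial, ← Algebra.smul_def, mul_smul_comm, smul_mul_assoc, ← pow_add]
        exact Submodule.smul_mem _ _ (hmem1 _ _)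
  have hmemQ : ∀ p : k[X], ∀ i j : ℕ, (aeval H p * (Y ^ i * H ^ j) : GWA k q a) ∈ M := by
    intro p
    induction p using Polynomial.induction_on' with
    | add p r hp hr =>
        intro i j
        rw [map_add, add_mul]
        exact add_mem (hp i j) (hr i j)
    | monomial t c =>
        intro i j
        rw [aeval_monomial, ← Algebra.smul_def, smul_mul_assoc, ← mul_assoc,
          hpow_ypow, smul_mul_assoc, smul_smul, mul_assoc, ← pow_add]
        exact Submodule.smul_mem _ _ (hsub ⟨.inl (i, t + j), rfl⟩)
  have hyb : ∀ s ∈ Set.range (bfun q a), (Y * s : GWA k q a) ∈ M := by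
    rintro _ ⟨(⟨i, j⟩ | ⟨j, m⟩), rfl⟩
    · show (Y * (Y ^ i * H ^ j) : GWA k q a) ∈ M
      rw [← mul_assoc, ← pow_succ']
      exact hsub ⟨.inl (i + 1, j), rfl⟩
    · show (Y * (H ^ j * Xg ^ (m + 1)) : GWA k q a) ∈ M
      rw [← mul_assoc, y_hpow q a hq0, smul_mul_assoc]
      refine Submodule.smul_mem _ _ ?_
      rw [pow_succ' (GWA.x k q a) m, mul_assoc, ← mul_assoc (GWA.y k q a), rel_yx,
        ← mul_assoc]
      exact hmemP a j m
  have hhb : ∀ s ∈ Set.range (bfun q a), (H * s : GWA k q a) ∈ M := by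
    rintro _ ⟨(⟨i, j⟩ | ⟨j, m⟩), rfl⟩
    · show (H * (Y ^ i * H ^ j) : GWA k q a) ∈ M
      have h1 := hpow_ypow q a 1 i
      rw [pow_one] at h1
      rw [← mul_assoc, h1, smul_mul_assoc, mul_assoc, ← pow_succ']
      exact Submodule.smul_mem _ _ (hsub ⟨.inl (i, j + 1), rfl⟩)
    · show (H * (H ^ j * Xg ^ (m + 1)) : GWA k q a) ∈ M
      rw [← mul_assoc, ← pow_succ']
      exact hsub ⟨.inr (j + 1, m), rfl⟩
  have hxb : ∀ s ∈ Set.range (bfun q a), (Xg * s : GWA k q a) ∈ M := by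
    rintro _ ⟨(⟨i, j⟩ | ⟨j, m⟩), rfl⟩
    · show (Xg * (Y ^ i * H ^ j) : GWA k q a) ∈ M
      match i with
      | 0 =>
          rw [pow_zero, one_mul, x_hpow]
          refine Submodule.smul_mem _ _ ?_
          have := hmem1 j 1
          rwa [pow_one] at this
      | i + 1 =>
          rw [pow_succ' (GWA.y k q a) i, mul_assoc, ← mul_assoc (GWA.x k q a), rel_xy]
          have he : aeval (q • (H : GWA k q a)) a = aeval (H : GWA k q a) (a.comp (C q * X)) := by
            rw [aeval_comp, map_mul, aeval_C, aeval_X, ← Algebra.smul_def]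
          rw [he]
          exact hmemQ _ i j
    · show (Xg * (H ^ j * Xg ^ (m + 1)) : GWA k q a) ∈ M
      rw [← mul_assoc, x_hpow, smul_mul_assoc, mul_assoc, ← pow_succ']
      exact Submodule.smul_mem _ _ (hsub ⟨.inr (j, m + 1), rfl⟩)
  have hgen : ∀ g : GWA k q a, (∀ s ∈ Set.range (bfun q a), g * s ∈ M) →
      ∀ v ∈ M, g * v ∈ M := by
    intro g hg v hv
    induction hv using Submodule.span_induction with
    | mem s hs => exact hg s hs
    | zero => rw [mul_zero]; exact zero_mem M
    | add u w _ _ hu hw => rw [mul_add]; exact add_mem hu hw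
    | smul c u _ hu => rw [mul_smul_comm]; exact Submodule.smul_mem _ _ hu
  have honeM : (1 : GWA k q a) ∈ M := by
    have he : bfun q a (.inl (0, 0)) = 1 := by simp [bfun]
    rw [← he]; exact hsub ⟨_, rfl⟩
  have key : ∀ w : FreeAlgebra k (Fin 3), ∀ v ∈ M,
      RingQuot.mkAlgHom k (gwaRel k q a) w * v ∈ M := by
    intro w
    induction w using FreeAlgebra.induction with
    | grade0 r =>
        intro v hv
        rw [AlgHom.commutes, ← Algebra.smul_def]
        exact Submodule.smul_mem _ _ hv
    | grade1 i =>
        intro v hv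
        fin_cases i
        · exact hgen _ (hyb) v hv
        · exact hgen _ (hhb) v hv
        · exact hgen _ (hxb) v hv
    | mul u w hu hw =>
        intro v hv
        rw [map_mul, mul_assoc]
        exact hu _ (hw v hv)
    | add u w hu hw =>
        intro v hv
        rw [map_add, add_mul]
        exact add_mem (hu v hv) (hw v hv)
  refine Submodule.eq_top_iff'.mpr fun g => ?_
  obtain ⟨w, rfl⟩ := RingQuot.mkAlgHom_surjective k (gwaRel k q a) g
  have := key w 1 honeM
  rwa [mul_one] at this

end Rels

/-! ### Linear independence via the representation -/

section Indep
variable (q : k) (a : k[X])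

noncomputable def cpoly : ℕ → k[X]
  | 0 => 1
  | i + 1 => aeval (C (q ^ ((i : ℤ) + 1)) * X) a * cpoly i

lemma Yop_pow (i : ℕ) (f : k[X]) :
    (Yop q a ^ i) (Finsupp.single (0 : ℤ) f)
      = Finsupp.single (-(i : ℤ)) (cpoly q a i * f) := by
  induction i with
  | zero => simp [cpoly]
  | succ i ih =>
      rw [pow_succ', Module.End.mul_apply, ih, Yop_single,
        show (1 - -(i : ℤ)) = (i : ℤ) + 1 by ring,
        show (-(i : ℤ) - 1) = -((i + 1 : ℕ) : ℤ) by push_cast; ring]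
      congr 1
      rw [cpoly, mul_assoc]

lemma Xop_pow (t : ℕ) (n : ℤ) (f : k[X]) :
    ((Xop : Module.End k (ℤ →₀ k[X])) ^ t) (Finsupp.single n f)
      = Finsupp.single (n + t) f := by
  induction t generalizing n with
  | zero => simp
  | succ t ih =>
      rw [pow_succ, Module.End.mul_apply, Xop_single, ih]
      congr 1
      push_cast
      ring

lemma aeval_CX_ne_zero (ha : 1 ≤ a.natDegree) (c : k) (hc : c ≠ 0) :
    aeval (C c * X) a ≠ 0 := by
  intro h0
  have h1 : (C c * X).natDegree = 1 := natDegree_C_mul_X _ hc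
  have h2 : (a.comp (C c * X)).natDegree = a.natDegree := by
    rw [natDegree_comp, h1, mul_one]
  rw [comp_eq_aeval, h0, natDegree_zero] at h2
  omega

lemma cpoly_ne_zero (hq0 : q ≠ 0) (ha : 1 ≤ a.natDegree) (i : ℕ) :
    cpoly q a i ≠ 0 := by
  induction i with
  | zero => exact one_ne_zero
  | succ i ih =>
      exact mul_ne_zero (aeval_CX_ne_zero a ha _ (zpow_ne_zero _ hq0)) ih

lemma X_pow_indep : LinearIndependent k fun j : ℕ => (X : k[X]) ^ j := by
  have h1 := (Polynomial.basisMonomials k).linearIndependent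
  simpa [Polynomial.coe_basisMonomials, Polynomial.X_pow_eq_monomial] using h1

noncomputable def dfam : ℤ → ℕ → k[X] := fun z j =>
  if 0 < z then (C (q ^ (-z)) * X) ^ j else cpoly q a (-z).toNat * X ^ j

lemma dfam_indep (hq0 : q ≠ 0) (ha : 1 ≤ a.natDegree) (z : ℤ) :
    LinearIndependent k (dfam q a z) := by
  by_cases hz : 0 < z
  · have hu : ∀ j : ℕ, dfam q a z j = ((Units.mk0 (q ^ (-z)) (zpow_ne_zero _ hq0)) ^ j
        : kˣ) • ((X : k[X]) ^ j) := by
      intro j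
      simp only [dfam, if_pos hz, Units.smul_def, Units.val_pow_eq_pow_val, Units.val_mk0,
        Polynomial.smul_eq_C_mul, map_pow, mul_pow]
    have h2 := X_pow_indep.units_smul
      (fun j : ℕ => (Units.mk0 (q ^ (-z)) (zpow_ne_zero _ hq0)) ^ j)
    convert h2 using 1
    funext j
    rw [hu j]
    rfl
  · have hc := cpoly_ne_zero q a hq0 ha (-z).toNat
    have h2 := X_pow_indep.map' (LinearMap.mulLeft k (cpoly q a (-z).toNat))
      (LinearMap.ker_eq_bot.mpr (fun u v huv => mul_left_cancel₀ hc huv))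
    convert h2 using 1
    funext j
    simp [dfam, if_neg hz]
    all_goals rfl

end Indep

end GWAproof

open GWAproof

/-- The set `{y^i h^j : i,j ≥ 0} ∪ {h^j x^m : j ≥ 0, m ≥ 1}` is a `k`-basis of
the quantum generalized Weyl algebra `A(a,q)`. -/
theorem gwa_basis (k : Type*) [Field k] [CharZero k] (q : k)
    (hq0 : q ≠ 0) (hq1 : q ≠ 1) (a : k[X]) (hmonic : a.Monic)
    (hdeg : 1 < a.natDegree) :
    ∃ B : Module.Basis ((ℕ × ℕ) ⊕ (ℕ × ℕ)) k (GWA k q a),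
      (∀ i j : ℕ, B (Sum.inl (i, j)) = GWA.y k q a ^ i * GWA.h k q a ^ j) ∧
      (∀ j m : ℕ, B (Sum.inr (j, m)) = GWA.h k q a ^ j * GWA.x k q a ^ (m + 1)) := by
  classical
  have hN : 1 ≤ a.natDegree := le_of_lt hdeg
  have hspan := GWAproof.span_top q a hq0
  set v0 : ℤ →₀ k[X] := Finsupp.single 0 1 with hv0
  let evL : GWA k q a →ₗ[k] (ℤ →₀ k[X]) :=
    (LinearMap.applyₗ v0).comp (GWAproof.phi q a hq0).toLinearMap
  let F : (Σ _ : ℤ, ℕ) → (ℤ →₀ k[X]) :=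
    fun zj => Finsupp.single zj.1 (GWAproof.dfam q a zj.1 zj.2)
  have hF : LinearIndependent k F :=
    Finsupp.linearIndependent_single (GWAproof.dfam q a) (GWAproof.dfam_indep q a hq0 hN)
  let e : (ℕ × ℕ) ⊕ (ℕ × ℕ) → Σ _ : ℤ, ℕ := fun s =>
    match s with
    | .inl (i, j) => ⟨-(i : ℤ), j⟩
    | .inr (j, m) => ⟨(m : ℤ) + 1, j⟩
  have he : Function.Injective e := by
    intro s t hh
    have h1 := congrArg Sigma.fst hh
    have h2 := congrArg Sigma.snd hh
    rcases s with ⟨i, j⟩ | ⟨j, m⟩ <;> rcases t with ⟨i', j'⟩ | ⟨j', m'⟩ <;>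
        simp only [e] at h1 h2
    · have hii : i = i' := by omega
      subst hii; subst h2; rfl
    · exact absurd h1 (by omega)
    · exact absurd h1 (by omega)
    · have hmm' : m = m' := by omega
      subst hmm'; subst h2; rfl
  have hHop : ∀ (j : ℕ) (n : ℤ) (f : k[X]),
      ((Hop q : Module.End k (ℤ →₀ k[X])) ^ j) (Finsupp.single n f)
        = Finsupp.single n ((C (q ^ (-n)) * X) ^ j * f) :=
    fun j n f => pow_single (Hop q) (fun n => C (q ^ (-n)) * X) (fun n f => Hop_single q n f) j n f
  have hcomp : evL ∘ (GWAproof.bfun q a) = F ∘ e := by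
    funext s
    match s with
    | .inl (i, j) =>
        show GWAproof.phi q a hq0 (GWA.y k q a ^ i * GWA.h k q a ^ j) v0 = _
        rw [map_mul, map_pow, map_pow, phi_y, phi_h, Module.End.mul_apply, hv0, hHop,
          show ((C (q ^ (-(0:ℤ))) * X) ^ j * 1 : k[X]) = X ^ j by simp, Yop_pow]
        show _ = Finsupp.single (-(i:ℤ)) (GWAproof.dfam q a (-(i:ℤ)) j)
        rw [GWAproof.dfam, if_neg (by omega), neg_neg, Int.toNat_natCast]
    | .inr (j, m) =>
        show GWAproof.phi q a hq0 (GWA.h k q a ^ j * GWA.x k q a ^ (m + 1)) v0 = _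
        rw [map_mul, map_pow, map_pow, phi_h, phi_x, Module.End.mul_apply, hv0, Xop_pow, hHop]
        show _ = Finsupp.single ((m:ℤ)+1) (GWAproof.dfam q a ((m:ℤ)+1) j)
        rw [GWAproof.dfam, if_pos (by omega), mul_one,
          show ((0:ℤ) + ((m+1:ℕ):ℤ)) = (m:ℤ)+1 by push_cast; ring]
  have hli : LinearIndependent k (GWAproof.bfun q a) := by
    apply LinearIndependent.of_comp evL
    rw [hcomp]
    exact hF.comp e he
  refine ⟨Module.Basis.mk hli (le_of_eq hspan.symm), fun i j => ?_, fun j m => ?_⟩ <;>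
    rw [Module.Basis.mk_apply] <;> rfl
end
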